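/- For every a > 0, the integral over θ ∈ [−π, π] of min{1, (|sin θ|/a)^2} / sin²θ dθ is bounded by a universal constant times 1/(a(1+a)). -/

import Mathlib

open Real

set_option maxHeartbeats 800000 in
/-- For every `a > 0`, `∫_{-π}^{π} min{1, (|sin θ|/a)^2} / sin² θ dθ ≪ 1/(a(1+a))`
with a universal implied constant. -/
theorem theta_integral_bound_two :
    ∃ C : ℝ, 0 < C ∧ ∀ a : ℝ, 0 < a →
      ∫ θ in (-π)..π, min 1 ((|Real.sin θ| / a) ^ 2) / (Real.sin θ) ^ 2
        ≤ C * (1 / (a * (1 + a))) := by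
  have pi_pos := Real.pi_pos
  refine ⟨4 * π ^ 2, by positivity, fun a ha => ?_⟩
  set f : ℝ → ℝ := fun θ => min 1 ((|Real.sin θ| / a) ^ 2) / Real.sin θ ^ 2 with hf
  -- `f` is nonnegative and bounded by `1/a²`
  have hf_nonneg : ∀ θ, 0 ≤ f θ := by
    intro θ
    have h0 : (0:ℝ) ≤ min 1 ((|Real.sin θ| / a) ^ 2) := le_min one_pos.le (by positivity)
    exact div_nonneg h0 (sq_nonneg _)
  have hf_le : ∀ θ, f θ ≤ 1 / a ^ 2 := by
    intro θ
    rcases eq_or_ne (Real.sin θ) 0 with h | h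
    · simp only [hf, h]
      simp
      positivity
    · have hs : 0 < Real.sin θ ^ 2 := by positivity
      have h1 : f θ ≤ ((|Real.sin θ| / a) ^ 2) / Real.sin θ ^ 2 := by
        simp only [hf]
        gcongr
        exact min_le_right _ _
      have h2 : ((|Real.sin θ| / a) ^ 2) / Real.sin θ ^ 2 = 1 / a ^ 2 := by
        rw [div_pow, sq_abs]
        field_simp
      linarith [h1, h2.le]
  -- measurability and integrability
  have hmeas : Measurable f := by
    apply Measurable.div
    · exact (measurable_const.min (((Real.measurable_sin.abs).div measurable_const).pow_const 2))
    · exact Real.measurable_sin.pow_const 2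
  have hint : ∀ u v : ℝ, IntervalIntegrable f MeasureTheory.volume u v := by
    intro u v
    apply (intervalIntegrable_const (c := 1 / a ^ 2)).mono_fun
      (hmeas.aestronglyMeasurable.restrict)
    filter_upwards with x
    rw [Real.norm_eq_abs, Real.norm_eq_abs, abs_of_nonneg (hf_nonneg x),
      abs_of_nonneg (by positivity : (0:ℝ) ≤ 1 / a ^ 2)]
    exact hf_le x
  -- periodicity with period π
  have hper : Function.Periodic f π := by
    intro x
    simp only [hf, Real.sin_add_pi, abs_neg, neg_sq]
  -- reduce to the interval [-π/2, π/2]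
  have h1 : (∫ θ in (-π)..(0:ℝ), f θ) = ∫ θ in (-(π/2))..(π/2), f θ := by
    have := hper.intervalIntegral_add_eq (-π) (-(π/2))
    rwa [show -π + π = (0:ℝ) by ring, show -(π/2) + π = π/2 by ring] at this
  have h2 : (∫ θ in (0:ℝ)..π, f θ) = ∫ θ in (-(π/2))..(π/2), f θ := by
    have := hper.intervalIntegral_add_eq 0 (-(π/2))
    rwa [zero_add, show -(π/2) + π = π/2 by ring] at this
  have hsplit : (∫ θ in (-π)..π, f θ) = 2 * ∫ θ in (-(π/2))..(π/2), f θ := by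
    rw [← intervalIntegral.integral_add_adjacent_intervals (hint (-π) 0) (hint 0 π), h1, h2]
    ring
  -- pointwise bound on [-π/2, π/2]
  have key : ∀ θ ∈ Set.Icc (-(π/2)) (π/2), f θ ≤ 2 / (a ^ 2 + (2/π) ^ 2 * θ ^ 2) := by
    rintro θ ⟨hθ1, hθ2⟩
    have habs : |θ| ≤ π / 2 := abs_le.2 ⟨hθ1, hθ2⟩
    have hjord : 2 / π * |θ| ≤ |Real.sin θ| := Real.mul_abs_le_abs_sin habs
    have hθsq : (2/π) ^ 2 * θ ^ 2 ≤ Real.sin θ ^ 2 := by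
      calc (2/π) ^ 2 * θ ^ 2 = (2/π * |θ|) ^ 2 := by rw [mul_pow, sq_abs]
        _ ≤ |Real.sin θ| ^ 2 := pow_le_pow_left₀ (by positivity) hjord 2
        _ = Real.sin θ ^ 2 := sq_abs _
    have hden : 0 < a ^ 2 + (2/π) ^ 2 * θ ^ 2 := by positivity
    rcases eq_or_ne (Real.sin θ) 0 with h | h
    · simp only [hf, h]
      simp
      positivity
    · have hs : 0 < Real.sin θ ^ 2 := by positivity
      rcases le_total (Real.sin θ ^ 2) (a ^ 2) with hc | hc
      · refine (hf_le θ).trans ?_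
        rw [div_le_div_iff₀ (by positivity) hden]
        nlinarith
      · have hle : f θ ≤ 1 / Real.sin θ ^ 2 := by
          simp only [hf]
          gcongr
          exact min_le_left _ _
        refine hle.trans ?_
        rw [div_le_div_iff₀ hs hden]
        nlinarith
  -- integrability of the dominating function
  have hintg : IntervalIntegrable (fun θ : ℝ => 2 / (a ^ 2 + (2/π) ^ 2 * θ ^ 2))
      MeasureTheory.volume (-(π/2)) (π/2) := by
    apply Continuous.intervalIntegrable
    exact continuous_const.div (by continuity) (fun x => by positivity)
  have hmono : (∫ θ in (-(π/2))..(π/2), f θ)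
      ≤ ∫ θ in (-(π/2))..(π/2), 2 / (a ^ 2 + (2/π) ^ 2 * θ ^ 2) :=
    intervalIntegral.integral_mono_on (by linarith) (hint _ _) hintg key
  -- compute the dominating integral
  have hk : (2 / (π * a)) ≠ 0 := by positivity
  have hcalc : (∫ θ in (-(π/2))..(π/2), 2 / (a ^ 2 + (2/π) ^ 2 * θ ^ 2))
      = (2 * π / a) * arctan (1 / a) := by
    have h0 : (∫ θ in (-(π/2))..(π/2), 2 / (a ^ 2 + (2/π) ^ 2 * θ ^ 2))
        = ∫ θ in (-(π/2))..(π/2), (2 / a ^ 2) * (1 + ((2 / (π * a)) * θ) ^ 2)⁻¹ := by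
      apply intervalIntegral.integral_congr
      intro θ _
      show 2 / (a ^ 2 + (2/π) ^ 2 * θ ^ 2) = (2 / a ^ 2) * (1 + ((2 / (π * a)) * θ) ^ 2)⁻¹
      have hd : a ^ 2 + (2/π) ^ 2 * θ ^ 2 = a ^ 2 * (1 + ((2 / (π * a)) * θ) ^ 2) := by
        field_simp
      rw [hd, ← div_div, div_eq_mul_inv (2 / a ^ 2)]
    have hsub : (∫ θ in (-(π/2))..(π/2), (1 + ((2 / (π * a)) * θ) ^ 2)⁻¹)
        = (2 / (π * a))⁻¹ • ∫ u in ((2 / (π * a)) * (-(π/2)))..((2 / (π * a)) * (π/2)),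
            (1 + u ^ 2)⁻¹ :=
      intervalIntegral.integral_comp_mul_left (fun u : ℝ => (1 + u ^ 2)⁻¹) hk
    have e1 : (2 / (π * a)) * (π/2) = 1 / a := by
      field_simp
    have e2 : (2 / (π * a)) * (-(π/2)) = -(1 / a) := by
      rw [mul_neg, e1]
    rw [h0, intervalIntegral.integral_const_mul, hsub, e1, e2,
      integral_inv_one_add_sq, arctan_neg, smul_eq_mul]
    field_simp
    ring
  -- the arctan bound
  have harctan : arctan (1 / a) ≤ π / (1 + a) := by
    rcases le_total a 1 with hA | hA
    · refine (arctan_lt_pi_div_two _).le.trans ?_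
      rw [div_le_div_iff₀ two_pos (by linarith)]
      nlinarith
    · have h0 : 0 ≤ arctan (1 / a) := by
        have := Real.arctan_strictMono.monotone (show (0:ℝ) ≤ 1 / a by positivity)
        simpa using this
      have h1 : arctan (1 / a) ≤ 1 / a := by
        have := Real.le_tan h0 (arctan_lt_pi_div_two _)
        rwa [tan_arctan] at this
      refine h1.trans ?_
      rw [div_le_div_iff₀ ha (by linarith)]
      nlinarith [Real.pi_gt_three]
  -- put everything together
  calc (∫ θ in (-π)..π, f θ) = 2 * ∫ θ in (-(π/2))..(π/2), f θ := hsplit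
    _ ≤ 2 * ((2 * π / a) * arctan (1 / a)) := by rw [← hcalc]; linarith [hmono]
    _ ≤ 2 * ((2 * π / a) * (π / (1 + a))) := by
        have hpa : 0 ≤ 2 * π / a := by positivity
        nlinarith [mul_le_mul_of_nonneg_left harctan hpa]
    _ = 4 * π ^ 2 * (1 / (a * (1 + a))) := by field_simp; ring
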